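/- For n ≥ 1, ∑_{k=0}^n C(n,k) * (-1)^{k-1} * H k² / k = H n * H n^{(2)} - ∑_{m=0}^{n-1} H m^{(2)} / (n-m), where H n = ∑_{j=1}^n 1/j and H n^{(2)} = ∑_{j=1}^n 1/j², with the k=0 term of the left sum interpreted as 0. -/

import Mathlib

open Finset

private def Hq (n : ℕ) : ℚ := ∑ j ∈ range n, (1 : ℚ) / (j + 1)
private def H2q (n : ℕ) : ℚ := ∑ j ∈ range n, (1 : ℚ) / ((j + 1) * (j + 1))

private lemma Hq_succ (n : ℕ) : Hq (n+1) = Hq n + 1/(n+1) := by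
  simp [Hq, sum_range_succ]

private lemma H2q_succ (n : ℕ) : H2q (n+1) = H2q n + 1/((n+1)*(n+1)) := by
  simp [H2q, sum_range_succ]

private lemma pascalDiv (n j : ℕ) :
    (n.choose j : ℚ) / (j+1) = ((n+1).choose (j+1) : ℚ) / (n+1) := by
  rw [div_eq_div_iff (by positivity) (by positivity)]
  have := Nat.add_one_mul_choose_eq n j
  have h2 : ((n+1 : ℕ):ℚ) * (n.choose j : ℚ) = ((n+1).choose (j+1) : ℚ) * ((j+1:ℕ):ℚ) := by
    exact_mod_cast congrArg (Nat.cast : ℕ → ℚ) this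
  push_cast at h2 ⊢
  linarith

private lemma altQ (n : ℕ) :
    ∑ j ∈ range (n+1), (-1 : ℚ)^j * ((n+1).choose (j+1) : ℚ) = 1 := by
  have h := @Int.alternating_sum_range_choose (n+1)
  rw [if_neg (Nat.succ_ne_zero n)] at h
  have h2 : ∑ m ∈ range (n+2), (-1 : ℚ)^m * ((n+1).choose m : ℚ) = 0 := by
    exact_mod_cast congrArg (Int.cast : ℤ → ℚ) h
  rw [Finset.sum_range_succ'] at h2
  simp only [pow_succ, Nat.choose_zero_right] at h2
  have h3 : ∑ x ∈ range (n+1), (-1:ℚ)^x * -1 * ((n+1).choose (x+1) : ℚ)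
      = -(∑ j ∈ range (n+1), (-1 : ℚ)^j * ((n+1).choose (j+1) : ℚ)) := by
    rw [← Finset.sum_neg_distrib]; apply sum_congr rfl; intro j _; ring
  rw [h3] at h2
  simp at h2
  linarith

-- Pascal split: generic
private lemma pascal_split (g : ℕ → ℚ) (n : ℕ) :
    ∑ j ∈ range (n+1), (-1 : ℚ)^j * (((n+1).choose (j+1) : ℕ) : ℚ) * g j =
      ∑ j ∈ range (n+1), (-1 : ℚ)^j * ((n.choose j : ℕ) : ℚ) * g j +
      ∑ j ∈ range n, (-1 : ℚ)^j * ((n.choose (j+1) : ℕ) : ℚ) * g j := by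
  have h : ∀ j, ((n+1).choose (j+1) : ℚ) = (n.choose j : ℚ) + (n.choose (j+1) : ℚ) := by
    intro j; exact_mod_cast congrArg (Nat.cast : ℕ → ℚ) (Nat.choose_succ_succ n j)
  calc ∑ j ∈ range (n+1), (-1 : ℚ)^j * (((n+1).choose (j+1) : ℕ) : ℚ) * g j
      = ∑ j ∈ range (n+1), ((-1 : ℚ)^j * ((n.choose j : ℕ) : ℚ) * g j
          + (-1 : ℚ)^j * ((n.choose (j+1) : ℕ) : ℚ) * g j) := by
        apply sum_congr rfl; intro j _; rw [h]; ring
    _ = _ := by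
        rw [sum_add_distrib]
        congr 1
        rw [Finset.sum_range_succ, Nat.choose_succ_self]
        simp

private lemma shift0 (h : ℕ → ℚ) (h0 : h 0 = 0) (n : ℕ) :
    ∑ j ∈ range (n+1), (-1 : ℚ)^j * ((n.choose j : ℕ) : ℚ) * h j =
      -∑ i ∈ range n, (-1 : ℚ)^i * ((n.choose (i+1) : ℕ) : ℚ) * h (i+1) := by
  rw [Finset.sum_range_succ']
  simp only [h0, pow_zero, Nat.choose_zero_right, mul_zero, add_zero, Nat.cast_one]
  rw [← Finset.sum_neg_distrib]
  apply sum_congr rfl; intro j _; ring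

private lemma pascal_lift (f : ℕ → ℚ) (n : ℕ) :
    ∑ j ∈ range (n+1), (-1 : ℚ)^j * ((n.choose j : ℕ) : ℚ) * (f j / (j+1)) =
      (∑ j ∈ range (n+1), (-1 : ℚ)^j * (((n+1).choose (j+1) : ℕ) : ℚ) * f j) / (n+1) := by
  rw [sum_div]
  apply sum_congr rfl; intro j _
  have h1 : (-1:ℚ)^j * ((n.choose j : ℕ) : ℚ) * (f j / (j+1))
      = ((n.choose j : ℚ)/(j+1)) * ((-1:ℚ)^j * f j) := by ring
  rw [h1, pascalDiv]; ring

-- A : sum over shifted binomials of 1/(j+1)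
private lemma lemA : ∀ n : ℕ, ∑ j ∈ range n, (-1 : ℚ)^j * ((n.choose (j+1) : ℕ) : ℚ) * (1/(j+1)) = Hq n := by
  intro n
  induction n with
  | zero => simp [Hq]
  | succ n ih =>
    rw [pascal_split (fun j => 1/((j:ℚ)+1)) n]
    have h1 : ∑ j ∈ range (n+1), (-1 : ℚ)^j * ((n.choose j : ℕ) : ℚ) * (1/(j+1)) = 1/(n+1) := by
      have := pascal_lift (fun _ => (1:ℚ)) n
      simp only [mul_one] at this
      rw [this, altQ]
    rw [h1, ih, Hq_succ]; ring

private lemma Hq0 : Hq 0 = 0 := by simp [Hq]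

private lemma lemB1 (n : ℕ) :
    ∑ j ∈ range (n+1), (-1 : ℚ)^j * ((n.choose j : ℕ) : ℚ) * (1/(j+1)) = 1/(n+1) := by
  have := pascal_lift (fun _ => (1:ℚ)) n
  simp only [mul_one] at this
  rw [this, altQ]

private lemma lemC (n : ℕ) :
    ∑ j ∈ range (n+1), (-1 : ℚ)^j * (((n+1).choose (j+1) : ℕ) : ℚ) * Hq (j+1) = 1/(n+1) := by
  rw [pascal_split (fun j => Hq (j+1)) n]
  have e1 : ∑ j ∈ range (n+1), (-1 : ℚ)^j * ((n.choose j : ℕ) : ℚ) * Hq (j+1)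
      = ∑ j ∈ range (n+1), ((-1 : ℚ)^j * ((n.choose j : ℕ) : ℚ) * Hq j
          + (-1 : ℚ)^j * ((n.choose j : ℕ) : ℚ) * (1/(j+1))) := by
    apply sum_congr rfl; intro j _; rw [Hq_succ]; ring
  rw [e1, sum_add_distrib, shift0 Hq Hq0 n, lemB1 n]
  ring

private lemma lemD (n : ℕ) :
    ∑ j ∈ range (n+1), (-1 : ℚ)^j * (((n+1).choose (j+1) : ℕ) : ℚ) * (Hq (j+1))^2 =
      2/((n+1)*(n+1)) - Hq (n+1)/(n+1) := by
  rw [pascal_split (fun j => (Hq (j+1))^2) n]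
  have e1 : ∑ j ∈ range (n+1), (-1 : ℚ)^j * ((n.choose j : ℕ) : ℚ) * (Hq (j+1))^2
      = ∑ j ∈ range (n+1), ((-1 : ℚ)^j * ((n.choose j : ℕ) : ℚ) * (Hq j)^2
          + (-1 : ℚ)^j * ((n.choose j : ℕ) : ℚ) * ((2 * Hq (j+1) - 1/(j+1)) / (j+1))) := by
    apply sum_congr rfl; intro j _
    rw [Hq_succ]
    have hj : ((j:ℚ)+1) ≠ 0 := by positivity
    field_simp
    ring
  rw [e1, sum_add_distrib, shift0 (fun j => (Hq j)^2) (by simp [Hq0]) n,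
    pascal_lift (fun j => 2 * Hq (j+1) - 1/(j+1)) n]
  have e2 : ∑ j ∈ range (n+1), (-1 : ℚ)^j * (((n+1).choose (j+1) : ℕ) : ℚ) * (2 * Hq (j+1) - 1/(j+1))
      = 2 * (∑ j ∈ range (n+1), (-1 : ℚ)^j * (((n+1).choose (j+1) : ℕ) : ℚ) * Hq (j+1))
        - ∑ j ∈ range (n+1), (-1 : ℚ)^j * (((n+1).choose (j+1) : ℕ) : ℚ) * (1/(j+1)) := by
    rw [Finset.mul_sum, ← Finset.sum_sub_distrib]
    apply sum_congr rfl; intro j _; ring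
  rw [e2, lemC n, lemA (n+1)]
  have hn : ((n:ℚ)+1) ≠ 0 := by positivity
  field_simp
  ring

-- left-hand side in shifted form
private noncomputable def G (n : ℕ) : ℚ :=
  ∑ j ∈ range n, (-1 : ℚ)^j * ((n.choose (j+1) : ℕ) : ℚ) * ((Hq (j+1))^2/(j+1))

private lemma lemG (n : ℕ) :
    G (n+1) = G n + (2/(((n:ℚ)+1)*((n:ℚ)+1)) - Hq (n+1)/((n:ℚ)+1))/((n:ℚ)+1) := by
  unfold G
  rw [pascal_split (fun j => (Hq (j+1))^2/(j+1)) n,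
    pascal_lift (fun j => (Hq (j+1))^2) n, lemD n]
  ring

private noncomputable def T (n : ℕ) : ℚ :=
  ∑ m ∈ range n, H2q m / ((n - m : ℕ) : ℚ)

private lemma refl_gen (f : ℕ → ℚ) (n : ℕ) :
    ∑ d ∈ range n, f (n-d) = ∑ j ∈ range n, f (j+1) := by
  rw [← Finset.sum_range_reflect (fun j => f (j+1)) n]
  apply sum_congr rfl; intro d hd; rw [mem_range] at hd; congr 1; omega

private lemma reflT (n : ℕ) : T n = ∑ d ∈ range n, H2q (n-1-d) / ((d+1 : ℕ) : ℚ) := by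
  unfold T
  rw [← Finset.sum_range_reflect (fun d => H2q (n-1-d) / ((d+1 : ℕ) : ℚ)) n]
  apply sum_congr rfl; intro m hm; rw [mem_range] at hm
  congr 2 <;> omega

private lemma refl1 (n : ℕ) : ∑ d ∈ range n, (1:ℚ)/((n-d : ℕ) : ℚ) = Hq n := by
  rw [refl_gen (fun k => (1:ℚ)/((k:ℕ):ℚ)) n]
  unfold Hq; apply sum_congr rfl; intro j _; push_cast; ring

private lemma refl2 (n : ℕ) :
    ∑ d ∈ range n, (1:ℚ)/(((n-d : ℕ) : ℚ) * ((n-d : ℕ) : ℚ)) = H2q n := by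
  rw [refl_gen (fun k => (1:ℚ)/(((k:ℕ):ℚ)*((k:ℕ):ℚ))) n]
  unfold H2q; apply sum_congr rfl; intro j _; push_cast; ring

private lemma lemPF (n : ℕ) :
    ∑ d ∈ range n, (1:ℚ)/(((d:ℚ)+1) * (((n-d : ℕ) : ℚ) * ((n-d : ℕ) : ℚ))) =
      2*Hq n/(((n:ℚ)+1)*((n:ℚ)+1)) + H2q n/((n:ℚ)+1) := by
  have e1 : ∑ d ∈ range n, (1:ℚ)/(((d:ℚ)+1) * (((n-d : ℕ) : ℚ) * ((n-d : ℕ) : ℚ)))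
      = ∑ d ∈ range n, ((1/(((n:ℚ)+1)*((n:ℚ)+1))) * ((1:ℚ)/((d:ℚ)+1))
          + (1/(((n:ℚ)+1)*((n:ℚ)+1))) * ((1:ℚ)/((n-d : ℕ) : ℚ))
          + (1/((n:ℚ)+1)) * ((1:ℚ)/(((n-d : ℕ) : ℚ) * ((n-d : ℕ) : ℚ)))) := by
    apply sum_congr rfl; intro d hd; rw [mem_range] at hd
    have hc : ((n-d : ℕ) : ℚ) = (n:ℚ) - (d:ℚ) := by
      rw [Nat.cast_sub (le_of_lt hd)]
    rw [hc]
    have h1 : ((d:ℚ)+1) ≠ 0 := by positivity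
    have h2 : ((n:ℚ)-(d:ℚ)) ≠ 0 := by
      have : (d:ℚ) < (n:ℚ) := by exact_mod_cast hd
      linarith
    have h3 : ((n:ℚ)+1) ≠ 0 := by positivity
    field_simp
    ring
  rw [e1]
  simp only [sum_add_distrib, ← Finset.mul_sum]
  rw [refl1 n, refl2 n]
  have : ∑ d ∈ range n, (1:ℚ)/((d:ℚ)+1) = Hq n := by
    unfold Hq; rfl
  rw [this]
  ring

private lemma lemT (n : ℕ) :
    T (n+1) = T n + 2*Hq n/(((n:ℚ)+1)*((n:ℚ)+1)) + H2q n/((n:ℚ)+1) := by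
  have key : T (n+1) = T n + ∑ d ∈ range n, (1:ℚ)/(((d:ℚ)+1) * (((n-d : ℕ) : ℚ) * ((n-d : ℕ) : ℚ))) := by
    rw [reflT (n+1), reflT n]
    have e0 : ∀ d ∈ range (n+1), H2q (n+1-1-d) / ((d+1 : ℕ) : ℚ) = H2q (n-d) / ((d+1 : ℕ) : ℚ) := by
      intro d _; congr 2
    rw [sum_congr rfl e0, Finset.sum_range_succ]
    have hz : H2q (n-n) = 0 := by simp [H2q]
    rw [hz]
    have e2 : ∀ d ∈ range n, H2q (n-d) / ((d+1 : ℕ) : ℚ)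
        = H2q (n-1-d) / ((d+1 : ℕ) : ℚ) + (1:ℚ)/(((d:ℚ)+1) * (((n-d : ℕ) : ℚ) * ((n-d : ℕ) : ℚ))) := by
      intro d hd; rw [mem_range] at hd
      have hs : n - d = (n-1-d) + 1 := by omega
      rw [hs, H2q_succ]
      have hcast : (((n-1-d : ℕ) : ℚ) + 1) = (((n-1-d) + 1 : ℕ) : ℚ) := by push_cast; ring
      rw [hcast, ← hs]
      have h1 : ((d:ℚ)+1) ≠ 0 := by positivity
      have h2 : ((n-d : ℕ):ℚ) ≠ 0 := Nat.cast_ne_zero.mpr (by omega)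
      push_cast
      field_simp
    rw [sum_congr rfl e2, sum_add_distrib]
    ring
  rw [key, lemPF n]
  ring

private lemma mainLem : ∀ n : ℕ, G n = Hq n * H2q n - T n := by
  intro n
  induction n with
  | zero => simp [G, T, Hq0]
  | succ n ih =>
    rw [lemG n, lemT n, ih, Hq_succ, H2q_succ]
    have hn : ((n:ℚ)+1) ≠ 0 := by positivity
    field_simp
    ring

theorem stmt_15 (H H2 : ℕ → ℚ)
    (hH : ∀ n, H n = ∑ j ∈ Finset.range n, (1 : ℚ) / (j + 1))
    (hH2 : ∀ n, H2 n = ∑ j ∈ Finset.range n, (1 : ℚ) / ((j + 1) * (j + 1)))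
    (n : ℕ) (hn : 1 ≤ n) :
    ∑ k ∈ Finset.range (n+1), (n.choose k : ℚ) * (-1 : ℚ)^(k - 1) * (H k)^2 / k =
      H n * H2 n - ∑ m ∈ Finset.range n, H2 m / (n - m : ℕ) := by
  have hHq : ∀ k, H k = Hq k := by intro k; rw [hH k]; rfl
  have hH2q : ∀ k, H2 k = H2q k := by intro k; rw [hH2 k]; rfl
  have hL : ∑ k ∈ Finset.range (n+1), (n.choose k : ℚ) * (-1 : ℚ)^(k - 1) * (H k)^2 / k = G n := by
    rw [Finset.sum_range_succ']
    have h0 : (n.choose 0 : ℚ) * (-1 : ℚ)^(0-1) * (H 0)^2 / ((0:ℕ):ℚ) = 0 := by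
      rw [hHq 0, Hq0]; simp
    rw [h0, add_zero]
    unfold G
    apply sum_congr rfl
    intro j _
    rw [hHq]
    simp only [Nat.add_sub_cancel]
    push_cast
    ring
  rw [hL, mainLem n]
  simp only [hHq, hH2q]
  unfold T
  rfl
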